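/- (Positive semidefiniteness of a bordered symmetric circulant matrix.) Let T ≥ 1, let m : Fin T → ℝ satisfy m_t = m_{(T−t) mod T} for all t, and let m_T, m_{T+1} ∈ ℝ. Let M be the symmetric (T+1)×(T+1) block matrix [[circ(m), m_T·1],[m_T·1ᵀ, m_{T+1}]], where 1 is the all-ones column vector of length T. Then M is positive semidefinite if and only if all of the following hold: (i) m_{T+1} ≥ 0; (ii) ∑_{t=0}^{T−1} m_t ≥ 0; (iii) m_{T+1} · ∑_{t=0}^{T−1} m_t ≥ T·m_T²; and (iv) ∑_{t=0}^{T−1} m_t · cos(2π j t / T) ≥ 0 for every j = 1, …, T−1. -/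

import Mathlib

open Matrix Finset


noncomputable def eT (T : ℕ) (n : ℤ) : ℂ := Complex.exp (2 * Real.pi * Complex.I * n / T)

lemma eT_add (T : ℕ) (a b : ℤ) : eT T (a + b) = eT T a * eT T b := by
  rw [eT, eT, eT, ← Complex.exp_add]; congr 1; push_cast; ring

lemma eT_zero (T : ℕ) : eT T 0 = 1 := by simp [eT]

lemma eT_pow (T : ℕ) (n : ℤ) (j : ℕ) : eT T (n * j) = (eT T n) ^ j := by
  rw [eT, eT, ← Complex.exp_nat_mul]; congr 1; push_cast; ring

lemma eT_dvd (T : ℕ) (hT : T ≠ 0) (n : ℤ) (h : (T : ℤ) ∣ n) : eT T n = 1 := by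
  obtain ⟨k, rfl⟩ := h
  rw [eT]
  have hT' : (T : ℂ) ≠ 0 := by exact_mod_cast Nat.cast_ne_zero.mpr hT
  have : 2 * (Real.pi : ℂ) * Complex.I * ((T : ℤ) * k : ℤ) / T = (k : ℤ) * (2 * Real.pi * Complex.I) := by
    push_cast; field_simp
  rw [this, Complex.exp_int_mul_two_pi_mul_I]

lemma eT_ne_one (T : ℕ) (hT : T ≠ 0) (n : ℤ) (h : ¬ (T : ℤ) ∣ n) : eT T n ≠ 1 := by
  intro h1
  rw [eT, Complex.exp_eq_one_iff] at h1
  obtain ⟨k, hk⟩ := h1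
  apply h ⟨k, ?_⟩
  have hT' : (T : ℂ) ≠ 0 := by exact_mod_cast Nat.cast_ne_zero.mpr hT
  have hpi : (Real.pi : ℂ) ≠ 0 := by exact_mod_cast Real.pi_ne_zero
  have h2 : (2 : ℂ) * Real.pi * Complex.I ≠ 0 := by
    simp [Complex.I_ne_zero, hpi]
  field_simp at hk
  have : (n : ℂ) = (T : ℂ) * (k : ℂ) := by
    apply mul_left_cancel₀ h2
    linear_combination (2 * (Real.pi:ℂ) * Complex.I) * hk
  exact_mod_cast this

lemma eT_sum (T : ℕ) (hT : T ≠ 0) (n : ℤ) :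
    ∑ j : Fin T, (eT T n) ^ (j : ℕ) = if (T : ℤ) ∣ n then (T : ℂ) else 0 := by
  rw [Fin.sum_univ_eq_sum_range]
  split_ifs with h
  · simp [eT_dvd T hT n h]
  · have hne := eT_ne_one T hT n h
    rw [geom_sum_eq hne T]
    have : eT T n ^ T = 1 := by
      rw [← eT_pow]
      exact eT_dvd T hT _ ⟨n, by ring⟩
    simp [this]

lemma eT_congr (T : ℕ) (hT : T ≠ 0) (a b : ℤ) (h : (T : ℤ) ∣ (a - b)) : eT T a = eT T b := by
  have : a = b + (a - b) := by ring
  rw [this, eT_add, eT_dvd T hT _ h, mul_one]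

lemma conj_eT (T : ℕ) (n : ℤ) : (starRingEnd ℂ) (eT T n) = eT T (-n) := by
  rw [eT, eT, ← Complex.exp_conj]
  congr 1
  simp [map_div₀, map_ofNat]

lemma eT_re (T : ℕ) (n : ℤ) : (eT T n).re = Real.cos (2 * Real.pi * n / T) := by
  have : (2 : ℂ) * Real.pi * Complex.I * n / T = ((2 * Real.pi * n / T : ℝ) : ℂ) * Complex.I := by
    push_cast; ring
  rw [eT, this, Complex.exp_ofReal_mul_I_re]

open Fin.CommRing in
lemma fin_dvd_iff (T : ℕ) [NeZero T] (k s t : Fin T) :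
    (T : ℤ) ∣ ((k : ℕ) : ℤ) + ((t : ℕ) : ℤ) - ((s : ℕ) : ℤ) ↔ t = s - k := by
  rw [← CharP.intCast_eq_zero_iff (Fin T) T]
  push_cast
  constructor
  · intro h; linear_combination h
  · intro h; linear_combination h

open Fin.CommRing in
lemma fin_dvd_sub (T : ℕ) [NeZero T] (t s : Fin T) :
    (T : ℤ) ∣ (((t : ℕ) : ℤ) - ((s : ℕ) : ℤ) - (((t - s : Fin T) : ℕ) : ℤ)) := by
  rw [← CharP.intCast_eq_zero_iff (Fin T) T]
  push_cast
  ring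


lemma quad_eval (T : ℕ) (m : Fin T → ℝ) (mT mT1 : ℝ) (x : Fin T → ℝ) (b : ℝ) :
    star (Sum.elim x fun _ : Unit => b) ⬝ᵥ
      ((Matrix.fromBlocks
        (Matrix.of fun i j : Fin T => m (j - i))
        (Matrix.of fun (_ : Fin T) (_ : Unit) => mT)
        (Matrix.of fun (_ : Unit) (_ : Fin T) => mT)
        (Matrix.of fun (_ : Unit) (_ : Unit) => mT1)) *ᵥ (Sum.elim x fun _ : Unit => b))
    = (∑ s, ∑ t, x s * m (t - s) * x t) + 2 * (mT * b) * (∑ t, x t) + mT1 * b ^ 2 := by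
  simp [dotProduct, Matrix.mulVec, Fintype.sum_sum_type, Matrix.fromBlocks,
    mul_add, add_mul, Finset.sum_add_distrib, Finset.mul_sum, Finset.sum_mul]
  ring_nf
  have h2 : (∑ t, b * mT * x t) + (∑ t, x t * b * mT) = ∑ t, b * mT * 2 * x t := by
    rw [← Finset.sum_add_distrib]; apply Finset.sum_congr rfl; intros; ring
  have h3 : ∑ t, b * mT * x t * 2 = (∑ t, b * mT * x t) * 2 := by rw [Finset.sum_mul]
  linarith

lemma discrim_aux (A B C : ℝ) (h : ∀ a b : ℝ, 0 ≤ A * a ^ 2 + 2 * B * a * b + C * b ^ 2) :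
    B ^ 2 ≤ A * C := by
  have hA : 0 ≤ A := by have := h 1 0; linarith
  have hC : 0 ≤ C := by have := h 0 1; linarith
  rcases eq_or_lt_of_le hA with hA0 | hA0
  · have hB : B = 0 := by
      by_contra hB
      have h1 := h (-(C + 1) / (2 * B)) 1
      rw [← hA0] at h1
      have : 2 * B * (-(C + 1) / (2 * B)) = -(C + 1) := by field_simp
      nlinarith [h1]
    rw [hB, ← hA0]; nlinarith
  · have h1 := h B (-A)
    nlinarith

lemma stepA (T : ℕ) [NeZero T] (m x : Fin T → ℝ) :
    ∑ j : Fin T, ((∑ k, (m k : ℂ) * eT T ((k:ℕ) * (j:ℕ))) *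
        ((∑ s, (x s : ℂ) * eT T (-((s:ℕ) * (j:ℕ)))) * (∑ t, (x t : ℂ) * eT T ((t:ℕ) * (j:ℕ)))))
    = (((T : ℝ) * ∑ k, ∑ s, m k * x (s - k) * x s : ℝ) : ℂ) := by
  have hT : T ≠ 0 := NeZero.ne T
  have h1 : ∀ j : Fin T, ((∑ k, (m k : ℂ) * eT T ((k:ℕ)*(j:ℕ))) *
        ((∑ s, (x s : ℂ) * eT T (-((s:ℕ)*(j:ℕ)))) * (∑ t, (x t : ℂ) * eT T ((t:ℕ)*(j:ℕ)))))
      = ∑ k, ∑ s, ∑ t, ((m k : ℂ) * x s * x t) *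
          (eT T (((k:ℕ):ℤ) + ((t:ℕ):ℤ) - ((s:ℕ):ℤ))) ^ (j:ℕ) := by
    intro j
    rw [Finset.sum_mul]
    apply Finset.sum_congr rfl; intro k _
    rw [Finset.sum_mul, Finset.mul_sum]
    apply Finset.sum_congr rfl; intro s _
    rw [Finset.mul_sum, Finset.mul_sum]
    apply Finset.sum_congr rfl; intro t _
    have he : eT T ((((k:ℕ):ℤ) + ((t:ℕ):ℤ) - ((s:ℕ):ℤ)) * ((j:ℕ):ℤ))
        = eT T (((k:ℕ):ℤ) * ((j:ℕ):ℤ)) *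
          (eT T (-(((s:ℕ):ℤ) * ((j:ℕ):ℤ))) * eT T (((t:ℕ):ℤ) * ((j:ℕ):ℤ))) := by
      rw [show ((((k:ℕ):ℤ) + ((t:ℕ):ℤ) - ((s:ℕ):ℤ)) * ((j:ℕ):ℤ))
          = (((k:ℕ):ℤ) * ((j:ℕ):ℤ)) + ((-(((s:ℕ):ℤ) * ((j:ℕ):ℤ))) + (((t:ℕ):ℤ) * ((j:ℕ):ℤ))) by ring,
        eT_add, eT_add]
    rw [← eT_pow, he]
    ring
  rw [Finset.sum_congr rfl fun j _ => h1 j]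
  rw [Finset.sum_comm]
  rw [Finset.sum_congr rfl fun k (_ : k ∈ Finset.univ) => Finset.sum_comm]
  rw [Finset.sum_congr rfl fun k (_ : k ∈ Finset.univ) =>
    Finset.sum_congr rfl fun s (_ : s ∈ Finset.univ) => Finset.sum_comm]
  have h2 : ∀ (k s : Fin T), ∑ t, ∑ j : Fin T, ((m k : ℂ) * x s * x t) *
      (eT T (((k:ℕ):ℤ) + ((t:ℕ):ℤ) - ((s:ℕ):ℤ))) ^ (j:ℕ)
      = (m k : ℂ) * x s * x (s - k) * T := by
    intro k s
    have : ∀ t : Fin T, ∑ j : Fin T, ((m k : ℂ) * x s * x t) *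
        (eT T (((k:ℕ):ℤ) + ((t:ℕ):ℤ) - ((s:ℕ):ℤ))) ^ (j:ℕ)
        = if t = s - k then (m k : ℂ) * x s * x t * T else 0 := by
      intro t
      rw [← Finset.mul_sum, eT_sum T hT,
        if_congr (fin_dvd_iff T k s t) (rfl : (T:ℂ) = T) rfl]
      split_ifs <;> simp
    rw [Finset.sum_congr rfl fun t _ => this t]
    simp [Finset.sum_ite_eq']
  rw [Finset.sum_congr rfl fun k (_ : k ∈ Finset.univ) =>
    Finset.sum_congr rfl fun s (_ : s ∈ Finset.univ) => h2 k s]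
  push_cast
  rw [Finset.mul_sum]
  apply Finset.sum_congr rfl; intro k _
  rw [Finset.mul_sum]
  apply Finset.sum_congr rfl; intro s _
  ring

lemma keyB (T : ℕ) [NeZero T] (m x : Fin T → ℝ) :
    (T : ℝ) * ∑ k, ∑ s, m k * x (s - k) * x s
      = ∑ j : Fin T, (∑ k, m k * Real.cos (2 * Real.pi * ((j:ℕ):ℝ) * ((k:ℕ):ℝ) / T)) *
          Complex.normSq (∑ t, (x t : ℂ) * eT T ((t:ℕ) * (j:ℕ))) := by
  have h := congrArg Complex.re (stepA T m x)
  rw [Complex.ofReal_re, Complex.re_sum] at h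
  rw [← h]
  apply Finset.sum_congr rfl; intro j _
  have hconj : (∑ s, (x s : ℂ) * eT T (-(((s:ℕ):ℤ) * ((j:ℕ):ℤ))))
      = (starRingEnd ℂ) (∑ t, (x t : ℂ) * eT T (((t:ℕ):ℤ) * ((j:ℕ):ℤ))) := by
    rw [map_sum]; apply Finset.sum_congr rfl; intro t _
    rw [_root_.map_mul, conj_eT, Complex.conj_ofReal]
  rw [hconj, ← Complex.normSq_eq_conj_mul_self, mul_comm _ ((Complex.normSq _ : ℝ) : ℂ),
    Complex.re_ofReal_mul, mul_comm]
  congr 1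
  rw [Complex.re_sum]
  apply Finset.sum_congr rfl; intro k _
  have hre : (eT T (((k:ℕ):ℤ) * ((j:ℕ):ℤ))).re
      = Real.cos (2 * Real.pi * ((j:ℕ):ℝ) * ((k:ℕ):ℝ) / T) := by
    rw [eT_re]; congr 1; push_cast; ring
  simp [Complex.mul_re, hre]

lemma reindexRow (T : ℕ) [NeZero T] (g : Fin T → ℝ) (s : Fin T) : ∑ t, g (t - s) = ∑ k, g k :=
  Equiv.sum_comp (Equiv.subRight s) g

lemma reindexQ (T : ℕ) [NeZero T] (m x : Fin T → ℝ) :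
    (∑ s, ∑ t, x s * m (t - s) * x t) = ∑ k, ∑ s, m k * x (s - k) * x s := by
  have h1 : ∀ s : Fin T, ∑ t, x s * m (t - s) * x t = ∑ k, x s * m k * x (k + s) := by
    intro s
    rw [← Equiv.sum_comp (Equiv.addRight s) (fun t => x s * m (t - s) * x t)]
    simp [add_sub_cancel_right]
  have h2 : ∀ k : Fin T, ∑ s, m k * x (s - k) * x s = ∑ s, m k * x s * x (s + k) := by
    intro k
    rw [← Equiv.sum_comp (Equiv.addRight k) (fun s => m k * x (s - k) * x s)]
    simp [add_sub_cancel_right]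
  rw [Finset.sum_congr rfl fun s _ => h1 s, Finset.sum_comm,
      Finset.sum_congr rfl fun k (_ : k ∈ Finset.univ) => h2 k]
  apply Finset.sum_congr rfl; intro k _
  apply Finset.sum_congr rfl; intro s _
  rw [add_comm s k]
  ring


/-- Positive semidefiniteness of a bordered symmetric circulant matrix
`M = [[circ m, mT·1], [mT·1ᵀ, mT1]]` (where `m t = m (-t)`): `M ⪰ 0` iff
(i) `mT1 ≥ 0`, (ii) `∑ t, m t ≥ 0`, (iii) `mT1 · ∑ t, m t ≥ T · mT²`, and
(iv) `∑ t, m t · cos (2 π j t / T) ≥ 0` for every `j = 1, …, T-1`. -/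
theorem bordered_circulant_posSemidef_iff (T : ℕ) (hT : 1 ≤ T) (m : Fin T → ℝ)
    (hm : ∀ t : Fin T, m t = m (-t)) (mT mT1 : ℝ) :
    (Matrix.fromBlocks
        (Matrix.of fun i j : Fin T => m (j - i))
        (Matrix.of fun (_ : Fin T) (_ : Unit) => mT)
        (Matrix.of fun (_ : Unit) (_ : Fin T) => mT)
        (Matrix.of fun (_ : Unit) (_ : Unit) => mT1)).PosSemidef ↔
      (0 ≤ mT1 ∧ 0 ≤ ∑ t : Fin T, m t ∧
        (T : ℝ) * mT ^ 2 ≤ mT1 * ∑ t : Fin T, m t ∧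
        ∀ j : Fin T, (j : ℕ) ≠ 0 →
          0 ≤ ∑ t : Fin T, m t * Real.cos (2 * Real.pi * (j : ℕ) * (t : ℕ) / T)) := by
  have hT0 : T ≠ 0 := by omega
  haveI : NeZero T := ⟨hT0⟩
  have hTpos : (0:ℝ) < T := by exact_mod_cast Nat.pos_of_ne_zero hT0
  have hHerm : (Matrix.fromBlocks
        (Matrix.of fun i j : Fin T => m (j - i))
        (Matrix.of fun (_ : Fin T) (_ : Unit) => mT)
        (Matrix.of fun (_ : Unit) (_ : Fin T) => mT)
        (Matrix.of fun (_ : Unit) (_ : Unit) => mT1)).IsHermitian := by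
    rw [Matrix.IsHermitian]
    ext i j
    rcases i with i | i <;> rcases j with j | j <;>
      simp [Matrix.conjTranspose_apply, Matrix.fromBlocks]
    rw [hm (j - i), neg_sub]
  constructor
  · intro hPSD; obtain ⟨hH, hq⟩ := Matrix.posSemidef_iff_dotProduct_mulVec.mp hPSD
    have quad' : ∀ (x : Fin T → ℝ) (b : ℝ),
        0 ≤ (∑ s, ∑ t, x s * m (t - s) * x t) + 2 * (mT * b) * (∑ t, x t) + mT1 * b ^ 2 := by
      intro x b
      have h := hq (Sum.elim x fun _ => b)
      rwa [quad_eval] at h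
    have hconst : ∀ a b : ℝ,
        0 ≤ ((T:ℝ) * ∑ k, m k) * a ^ 2 + 2 * ((T:ℝ) * mT) * a * b + mT1 * b ^ 2 := by
      intro a b
      have h := quad' (fun _ => a) b
      have e1 : (∑ s, ∑ t : Fin T, a * m (t - s) * a) = ((T:ℝ) * ∑ k, m k) * a ^ 2 := by
        have hrow : ∀ s : Fin T, (∑ t : Fin T, a * m (t - s) * a) = (∑ k, m k) * a ^ 2 := by
          intro s
          have hre : (∑ t : Fin T, a * m (t - s) * a) = ∑ k, a * m k * a :=
            reindexRow T (fun u => a * m u * a) s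
          rw [hre, Finset.sum_mul]
          apply Finset.sum_congr rfl; intros; ring
        rw [Finset.sum_congr rfl fun s _ => hrow s, Finset.sum_const, Finset.card_univ,
          Fintype.card_fin, nsmul_eq_mul]
        ring
      have hsum1 : (∑ _t : Fin T, a) = (T:ℝ) * a := by
        simp [Finset.sum_const, Finset.card_univ, nsmul_eq_mul]
      rw [e1, hsum1] at h
      nlinarith [h]
    refine ⟨?_, ?_, ?_, ?_⟩
    · nlinarith [hconst 0 1]
    · nlinarith [hconst 1 0, hTpos]
    · have hd := discrim_aux ((T:ℝ) * ∑ k, m k) ((T:ℝ) * mT) mT1 hconst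
      nlinarith [hd, hTpos]
    · intro j hj
      set u : Fin T → ℝ := fun t => (eT T (((t:ℕ):ℤ) * ((j:ℕ):ℤ))).re with hu_def
      set v : Fin T → ℝ := fun t => (eT T (((t:ℕ):ℤ) * ((j:ℕ):ℤ))).im with hv_def
      have hu := quad' u 0
      have hv := quad' v 0
      have hb0 : ∀ x : Fin T → ℝ,
          (∑ s, ∑ t, x s * m (t - s) * x t) + 2 * (mT * 0) * (∑ t, x t) + mT1 * 0 ^ 2
          = ∑ s, ∑ t, x s * m (t - s) * x t := by intro x; ring
      rw [hb0] at hu hv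
      have hc : ∀ s t : Fin T, u s * m (t - s) * u t + v s * m (t - s) * v t
          = m (t - s) * (eT T ((((t - s : Fin T):ℕ):ℤ) * ((j:ℕ):ℤ))).re := by
        intro s t
        have h1 : (starRingEnd ℂ) (eT T (((s:ℕ):ℤ) * ((j:ℕ):ℤ))) * eT T (((t:ℕ):ℤ) * ((j:ℕ):ℤ))
            = eT T ((((t - s : Fin T):ℕ):ℤ) * ((j:ℕ):ℤ)) := by
          rw [conj_eT, ← eT_add]
          apply eT_congr T hT0
          rw [show (-(((s:ℕ):ℤ) * ((j:ℕ):ℤ)) + ((t:ℕ):ℤ) * ((j:ℕ):ℤ))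
              - ((((t - s : Fin T):ℕ):ℤ) * ((j:ℕ):ℤ))
              = ((((t:ℕ):ℤ) - ((s:ℕ):ℤ)) - (((t - s : Fin T):ℕ):ℤ)) * ((j:ℕ):ℤ) by ring]
          exact Dvd.dvd.mul_right (fin_dvd_sub T t s) _
        have h2 := congrArg Complex.re h1
        simp only [Complex.mul_re, Complex.conj_re, Complex.conj_im] at h2
        rw [← h2, hu_def, hv_def]
        ring
      have hrow : ∀ s : Fin T, (∑ t, (u s * m (t - s) * u t + v s * m (t - s) * v t))
          = ∑ k, m k * Real.cos (2 * Real.pi * ((j:ℕ):ℝ) * ((k:ℕ):ℝ) / T) := by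
        intro s
        rw [Finset.sum_congr rfl fun t _ => hc s t]
        have hre : (∑ t, m (t - s) * (eT T ((((t - s : Fin T):ℕ):ℤ) * ((j:ℕ):ℤ))).re)
            = ∑ k, m k * (eT T (((k:ℕ):ℤ) * ((j:ℕ):ℤ))).re :=
          reindexRow T (fun k => m k * (eT T (((k:ℕ):ℤ) * ((j:ℕ):ℤ))).re) s
        rw [hre]
        apply Finset.sum_congr rfl; intro k _
        congr 1
        rw [eT_re]; congr 1; push_cast; ring
      have hfinal : (∑ s, ∑ t, u s * m (t - s) * u t) + (∑ s, ∑ t, v s * m (t - s) * v t)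
          = (T:ℝ) * ∑ k, m k * Real.cos (2 * Real.pi * ((j:ℕ):ℝ) * ((k:ℕ):ℝ) / T) := by
        rw [← Finset.sum_add_distrib]
        rw [Finset.sum_congr rfl fun s (_ : s ∈ Finset.univ) =>
          (Finset.sum_add_distrib).symm.trans (hrow s)]
        rw [Finset.sum_const, Finset.card_univ, Fintype.card_fin, nsmul_eq_mul]
      by_contra hcon
      push_neg at hcon
      nlinarith [hu, hv, hfinal, hTpos, hcon]
  · rintro ⟨h1, h2, h3, h4⟩
    refine Matrix.posSemidef_iff_dotProduct_mulVec.mpr ⟨hHerm, ?_⟩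
    intro y
    have hy : y = Sum.elim (fun i => y (Sum.inl i)) (fun _ : Unit => y (Sum.inr ())) := by
      funext i; rcases i with i | ⟨⟩ <;> rfl
    rw [hy, quad_eval]
    set x : Fin T → ℝ := fun i => y (Sum.inl i) with hx_def
    set b : ℝ := y (Sum.inr ()) with hb_def
    have hkey : ((∑ k, m k) * (∑ t, x t) ^ 2) ≤ (T:ℝ) * ∑ s, ∑ t, x s * m (t - s) * x t := by
      rw [reindexQ, keyB T m x]
      rw [← Finset.add_sum_erase Finset.univ
        (fun j : Fin T => (∑ k, m k * Real.cos (2 * Real.pi * ((j:ℕ):ℝ) * ((k:ℕ):ℝ) / T)) *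
          Complex.normSq (∑ t, (x t : ℂ) * eT T (((t:ℕ):ℤ) * ((j:ℕ):ℤ))))
        (Finset.mem_univ (0 : Fin T))]
      have hN0 : (∑ k, m k * Real.cos (2 * Real.pi * (((0 : Fin T):ℕ):ℝ) * ((k:ℕ):ℝ) / T)) *
            Complex.normSq (∑ t, (x t : ℂ) * eT T (((t:ℕ):ℤ) * ((((0 : Fin T):ℕ)):ℤ)))
          = (∑ k, m k) * (∑ t, x t) ^ 2 := by
        have hz : ∀ t : Fin T, (x t : ℂ) * eT T (((t:ℕ):ℤ) * ((((0 : Fin T):ℕ)):ℤ)) = (x t : ℂ) := by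
          intro t
          simp [eT]
        rw [Finset.sum_congr rfl fun t _ => hz t]
        have : (∑ t, (x t : ℂ)) = ((∑ t, x t : ℝ) : ℂ) := by push_cast; rfl
        rw [this, Complex.normSq_ofReal]
        have hcos : ∀ k : Fin T,
            m k * Real.cos (2 * Real.pi * (((0 : Fin T):ℕ):ℝ) * ((k:ℕ):ℝ) / T) = m k := by
          intro k; simp
        rw [Finset.sum_congr rfl fun k _ => hcos k]
        ring
      rw [hN0]
      have hrest : 0 ≤ ∑ j ∈ Finset.univ.erase (0 : Fin T),
          (∑ k, m k * Real.cos (2 * Real.pi * ((j:ℕ):ℝ) * ((k:ℕ):ℝ) / T)) *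
            Complex.normSq (∑ t, (x t : ℂ) * eT T (((t:ℕ):ℤ) * ((j:ℕ):ℤ))) := by
        apply Finset.sum_nonneg
        intro j hjmem
        have hj0 : (j : ℕ) ≠ 0 := by
          intro h
          exact Finset.ne_of_mem_erase hjmem (by apply Fin.ext; simpa using h)
        exact mul_nonneg (h4 j hj0) (Complex.normSq_nonneg _)
      linarith
    have hG : 0 ≤ (∑ k, m k) * (∑ t, x t) ^ 2 + 2 * ((T:ℝ) * mT) * (∑ t, x t) * b
        + (T:ℝ) * mT1 * b ^ 2 := by
      rcases eq_or_lt_of_le h2 with hA0 | hA0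
      · have hmT2 : mT ^ 2 = 0 := by nlinarith [h3, sq_nonneg mT]
        have hmT0 : mT = 0 := by
          have := sq_nonneg mT; nlinarith [sq_abs mT, abs_nonneg mT, pow_eq_zero_iff (two_ne_zero (α := ℕ)) |>.mp hmT2]
        rw [hmT0, ← hA0]
        have : (0:ℝ) ≤ (T:ℝ) * mT1 * b ^ 2 := by positivity
        nlinarith [this]
      · nlinarith [sq_nonneg ((∑ k, m k) * (∑ t, x t) + (T:ℝ) * mT * b),
          mul_nonneg (mul_nonneg hTpos.le (sq_nonneg b)) (sub_nonneg.mpr h3), hA0]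
    by_contra hcon
    push_neg at hcon
    nlinarith [hkey, hG, hTpos, hcon]
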